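/- arXiv:2506.01914 — 2 statements merged into one kernel-verified Lean document; each statement's English description precedes it below -/
import Mathlib

section
/- Let X_1, ..., X_N be mutually independent real-valued random variables such that X_i has distribution function F_i(x) = [H(x)]^{η_i}, where η_i > 0 for each i and H is a continuous distribution function on ℝ. Then for the identity permutation, P(X_1 ≤ X_2 ≤ ... ≤ X_N) = (∏_{i=1}^{N} η_i) / ∏_{i=1}^{N} (∑_{j=1}^{i} η_j). -/
open MeasureTheory ProbabilityTheory Finset Filter

lemma savage_pit (μ : Measure ℝ) [IsProbabilityMeasure μ] (G : ℝ → ℝ)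
    (hGc : Continuous G) (hGm : Monotone G)
    (hGbot : Tendsto G atBot (nhds 0)) (hGtop : Tendsto G atTop (nhds 1))
    (hcdf : ∀ x, μ (Set.Iic x) = ENNReal.ofReal (G x))
    {u : ℝ} (hu1 : u < 1) :
    μ {x | G x ≤ u} = ENNReal.ofReal u := by
  by_cases hne : {x | G x ≤ u}.Nonempty
  · obtain ⟨x₀, hx₀⟩ : ∃ x₀, u < G x₀ :=
      (hGtop.eventually (eventually_gt_nhds hu1)).exists
    have hbdd : ∀ x ∈ {x | G x ≤ u}, x ≤ x₀ := by
      intro x hx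
      by_contra h
      push_neg at h
      have := hGm h.le
      simp only [Set.mem_setOf_eq] at hx
      linarith
    set c := sSup {x | G x ≤ u} with hc
    have hcm : c ∈ {x | G x ≤ u} :=
      (isClosed_le hGc continuous_const).csSup_mem hne ⟨x₀, hbdd⟩
    have hset : {x | G x ≤ u} = Set.Iic c := by
      apply Set.Subset.antisymm
      · exact fun x hx => le_csSup ⟨x₀, hbdd⟩ hx
      · exact fun x hx => le_trans (hGm hx) hcm
    have hGceq : G c = u := by
      refine le_antisymm hcm (not_lt.1 fun h => ?_)
      have h2 : ∀ᶠ x in nhds c, G x < u := (hGc.tendsto c).eventually (eventually_lt_nhds h)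
      have h3 := h2.filter_mono (nhdsWithin_le_nhds (s := Set.Ioi c))
      obtain ⟨x, hx1, hx2⟩ := (h3.and self_mem_nhdsWithin).exists
      exact absurd (le_csSup ⟨x₀, hbdd⟩ (le_of_lt hx1 : G x ≤ u)) (not_le.2 hx2)
    rw [hset, hcdf, hGceq]
  · have hu0 : u ≤ 0 := by
      by_contra h
      push_neg at h
      exact hne ((hGbot.eventually (eventually_lt_nhds h)).exists.imp fun x hx => hx.le)
    rw [Set.not_nonempty_iff_eq_empty.mp hne]
    simp [ENNReal.ofReal_eq_zero.mpr hu0]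

lemma savage_key (H : ℝ → ℝ) (hHcont : Continuous H) (hHmono : Monotone H)
    (hHbot : Tendsto H atBot (nhds 0)) (hHtop : Tendsto H atTop (nhds 1))
    (μ : Measure ℝ) [IsProbabilityMeasure μ] {η S : ℝ} (hη : 0 < η) (hS : 0 ≤ S)
    (hcdf : ∀ x, μ (Set.Iic x) = ENNReal.ofReal (H x ^ η)) (t : ℝ) :
    ∫⁻ x in Set.Iic t, ENNReal.ofReal (H x ^ S) ∂μ
      = ENNReal.ofReal (η / (S + η) * H t ^ (S + η)) := by
  have hH0 : ∀ x, 0 ≤ H x := fun x =>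
    le_of_tendsto hHbot (eventually_atBot.2 ⟨x, fun y hy => hHmono hy⟩)
  have hH1 : ∀ x, H x ≤ 1 := fun x =>
    ge_of_tendsto hHtop (eventually_atTop.2 ⟨x, fun y hy => hHmono hy⟩)
  set G : ℝ → ℝ := fun x => H x ^ η with hG
  have hGm : Monotone G := fun a b hab => Real.rpow_le_rpow (hH0 a) (hHmono hab) hη.le
  have hGcont : Continuous G := hHcont.rpow_const (fun x => Or.inr hη.le)
  have hGbot : Tendsto G atBot (nhds 0) := by
    simpa [Real.zero_rpow hη.ne', Function.comp_def] using
      ((Real.continuousAt_rpow_const 0 η (Or.inr hη.le)).tendsto).comp hHbot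
  have hGtop : Tendsto G atTop (nhds 1) := by
    simpa [Real.one_rpow, Function.comp_def] using
      ((Real.continuousAt_rpow_const 1 η (Or.inl one_ne_zero)).tendsto).comp hHtop
  have hG0 : ∀ x, 0 ≤ G x := fun x => Real.rpow_nonneg (hH0 x) η
  have hG1 : ∀ x, G x ≤ 1 := fun x => Real.rpow_le_one (hH0 x) (hH1 x) hη.le
  set ν : Measure ℝ := (μ.restrict (Set.Iic t)).map G with hν
  have hνeq : ν = (volume : Measure ℝ).restrict (Set.Ioc 0 (G t)) := by
    refine Measure.ext_of_Iic _ _ (fun a => ?_)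
    rw [hν, Measure.map_apply hGcont.measurable measurableSet_Iic,
      Measure.restrict_apply (hGcont.measurable measurableSet_Iic),
      Measure.restrict_apply measurableSet_Iic]
    have hR : Set.Iic a ∩ Set.Ioc 0 (G t) = Set.Ioc 0 (min a (G t)) := by
      ext x
      simp only [Set.mem_inter_iff, Set.mem_Iic, Set.mem_Ioc, le_min_iff]
      tauto
    rw [hR, Real.volume_Ioc]
    rcases le_or_gt (G t) a with hle | hlt
    · have : G ⁻¹' Set.Iic a ∩ Set.Iic t = Set.Iic t := by
        apply Set.inter_eq_self_of_subset_right
        exact fun x hx => le_trans (hGm hx) hle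
      rw [this, hcdf t, min_eq_right hle, sub_zero]
    · have hsub : G ⁻¹' Set.Iic a ⊆ Set.Iic t := by
        intro x hx
        by_contra h
        simp only [Set.mem_Iic, not_le] at h
        exact absurd (hGm h.le) (not_le.2 (lt_of_le_of_lt hx hlt))
      rw [Set.inter_eq_self_of_subset_left hsub, min_eq_left hlt.le, sub_zero]
      exact savage_pit μ G hGcont hGm hGbot hGtop hcdf (lt_of_lt_of_le hlt (hG1 t))
  have hmulS : η * (S / η) = S := by field_simp
  calc ∫⁻ x in Set.Iic t, ENNReal.ofReal (H x ^ S) ∂μ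
      = ∫⁻ x in Set.Iic t, ENNReal.ofReal (G x ^ (S / η)) ∂μ := by
        refine lintegral_congr fun x => ?_
        rw [hG, ← Real.rpow_mul (hH0 x), hmulS]
    _ = ∫⁻ u, ENNReal.ofReal (u ^ (S / η)) ∂ν := by
        rw [hν, lintegral_map (by fun_prop) hGcont.measurable]
    _ = ∫⁻ u in Set.Ioc 0 (G t), ENNReal.ofReal (u ^ (S / η)) := by rw [hνeq]
    _ = ENNReal.ofReal (∫ u in Set.Ioc 0 (G t), u ^ (S / η)) := by
        rw [← ofReal_integral_eq_lintegral_ofReal]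
        · rw [← IntegrableOn, ← intervalIntegrable_iff_integrableOn_Ioc_of_le (hG0 t)]
          exact intervalIntegral.intervalIntegrable_rpow' (by linarith [div_nonneg hS hη.le])
        · exact (ae_restrict_iff' measurableSet_Ioc).2
            (ae_of_all _ fun u hu => Real.rpow_nonneg hu.1.le _)
    _ = ENNReal.ofReal (η / (S + η) * H t ^ (S + η)) := by
        congr 1
        rw [← intervalIntegral.integral_of_le (hG0 t),
          integral_rpow (Or.inl (by linarith [div_nonneg hS hη.le]))]
        have h1 : S / η + 1 = (S + η) / η := by field_simp
        have h2 : G t ^ ((S + η) / η) = H t ^ (S + η) := by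
          rw [hG, ← Real.rpow_mul (hH0 t)]
          congr 1
          field_simp
        have h3 : (0 : ℝ) ^ ((S + η) / η) = 0 := Real.zero_rpow (by positivity)
        rw [h1, h2, h3, sub_zero, div_div_eq_mul_div]
        ring

lemma savage_Iic_castSucc {n : ℕ} (i : Fin n) :
    Finset.Iic (Fin.castSucc i) = (Finset.Iic i).map Fin.castSuccEmb := by
  ext j
  simp only [Finset.mem_Iic, Finset.mem_map, Fin.le_def, Fin.castSuccEmb_apply]
  constructor
  · intro hj
    refine ⟨⟨j.1, lt_of_le_of_lt hj i.isLt⟩, hj, ?_⟩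
    ext
    simp
  · rintro ⟨k, hk, rfl⟩
    simpa using hk

lemma savage_aux (H : ℝ → ℝ) (hHcont : Continuous H) (hHmono : Monotone H)
    (hHbot : Tendsto H atBot (nhds 0)) (hHtop : Tendsto H atTop (nhds 1)) :
    ∀ (n : ℕ) (μ : Fin n → Measure ℝ), (∀ i, IsProbabilityMeasure (μ i)) →
    ∀ (η : Fin n → ℝ), (∀ i, 0 < η i) →
    (∀ i x, μ i (Set.Iic x) = ENNReal.ofReal (H x ^ η i)) → ∀ t : ℝ,
    Measure.pi μ {y | (∀ m, y m ≤ t) ∧ ∀ m m' : Fin n, m ≤ m' → y m ≤ y m'}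
      = ENNReal.ofReal
          ((∏ i, η i) / (∏ i, ∑ j ∈ Finset.Iic i, η j) * H t ^ (∑ i, η i)) := by
  intro n
  induction n with
  | zero =>
    intro μ hP η hη hcdf t
    haveI := hP
    have hset : {y : Fin 0 → ℝ | (∀ m, y m ≤ t) ∧ ∀ m m' : Fin 0, m ≤ m' → y m ≤ y m'}
        = Set.univ := by
      ext y
      simp only [Set.mem_setOf_eq, Set.mem_univ, iff_true]
      exact ⟨fun m => m.elim0, fun m => m.elim0⟩
    rw [hset, measure_univ]
    simp [Real.rpow_zero]
  | succ n ih =>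
    intro μ hP η hη hcdf t
    haveI := hP
    set S' : ℝ := ∑ i : Fin n, η i.castSucc with hS'def
    set c' : ℝ := (∏ i : Fin n, η i.castSucc) /
      (∏ i : Fin n, ∑ j ∈ Finset.Iic i, η j.castSucc) with hc'def
    have hS'0 : 0 ≤ S' := Finset.sum_nonneg fun i _ => (hη _).le
    have hBpos : 0 < ∏ i : Fin n, ∑ j ∈ Finset.Iic i, η j.castSucc :=
      Finset.prod_pos fun i _ =>
        Finset.sum_pos (fun j _ => hη _) ⟨i, Finset.mem_Iic.2 le_rfl⟩
    have hc'0 : 0 ≤ c' :=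
      div_nonneg (Finset.prod_nonneg fun i _ => (hη _).le) hBpos.le
    set e := MeasurableEquiv.piFinSuccAbove (fun _ : Fin (n + 1) => ℝ) (Fin.last n) with he
    set T : Set (ℝ × (Fin n → ℝ)) :=
      {p | ((∀ m, p.2 m ≤ p.1) ∧ ∀ m m' : Fin n, m ≤ m' → p.2 m ≤ p.2 m') ∧ p.1 ≤ t} with hT
    have hTmeas : MeasurableSet T := by
      have h1 : MeasurableSet {p : ℝ × (Fin n → ℝ) | ∀ m, p.2 m ≤ p.1} := by
        rw [Set.setOf_forall]
        exact MeasurableSet.iInter fun m =>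
          measurableSet_le (by fun_prop) measurable_fst
      have h2 : MeasurableSet
          {p : ℝ × (Fin n → ℝ) | ∀ m m' : Fin n, m ≤ m' → p.2 m ≤ p.2 m'} := by
        rw [Set.setOf_forall]
        refine MeasurableSet.iInter fun m => ?_
        rw [Set.setOf_forall]
        refine MeasurableSet.iInter fun m' => ?_
        by_cases h : m ≤ m'
        · have heq : {p : ℝ × (Fin n → ℝ) | m ≤ m' → p.2 m ≤ p.2 m'}
              = {p : ℝ × (Fin n → ℝ) | p.2 m ≤ p.2 m'} := by
            ext p; simp [h]
          rw [heq]
          exact measurableSet_le (by fun_prop) (by fun_prop)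
        · have heq : {p : ℝ × (Fin n → ℝ) | m ≤ m' → p.2 m ≤ p.2 m'} = Set.univ := by
            ext p; simp [h]
          rw [heq]
          exact MeasurableSet.univ
      exact ((h1.inter h2).inter (measurableSet_le measurable_fst measurable_const))
    have hpre : e ⁻¹' T = {y : Fin (n + 1) → ℝ |
        (∀ m, y m ≤ t) ∧ ∀ m m' : Fin (n + 1), m ≤ m' → y m ≤ y m'} := by
      ext y
      have hey : e y = (y (Fin.last n), fun j => y ((Fin.last n).succAbove j)) := rfl
      simp only [Set.mem_preimage, hey, hT, Set.mem_setOf_eq, Fin.succAbove_last]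
      constructor
      · rintro ⟨⟨h1, h2⟩, h3⟩
        constructor
        · intro m
          induction m using Fin.lastCases with
          | last => exact h3
          | cast j => exact le_trans (h1 j) h3
        · intro m m' hmm'
          induction m' using Fin.lastCases with
          | last =>
            induction m using Fin.lastCases with
            | last => exact le_rfl
            | cast j => exact h1 j
          | cast j' =>
            induction m using Fin.lastCases with
            | last => exact absurd hmm' (not_le.2 (Fin.castSucc_lt_last j'))
            | cast j => exact h2 j j' (by rwa [Fin.castSucc_le_castSucc_iff] at hmm')
      · rintro ⟨h1, h2⟩
        exact ⟨⟨fun m => h2 _ _ (Fin.le_last _),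
          fun j j' hjj' => h2 _ _ (Fin.castSucc_le_castSucc_iff.2 hjj')⟩, h1 _⟩
    have hmp := measurePreserving_piFinSuccAbove μ (Fin.last n)
    have hpiT : Measure.pi μ {y : Fin (n + 1) → ℝ |
          (∀ m, y m ≤ t) ∧ ∀ m m' : Fin (n + 1), m ≤ m' → y m ≤ y m'}
        = ((μ (Fin.last n)).prod
            (Measure.pi fun j => μ ((Fin.last n).succAbove j))) T := by
      rw [← hpre]
      exact hmp.measure_preimage hTmeas.nullMeasurableSet
    have hμ' : (fun j : Fin n => μ ((Fin.last n).succAbove j))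
        = fun j : Fin n => μ j.castSucc := by
      funext j; rw [Fin.succAbove_last]
    rw [hpiT, hμ', Measure.prod_apply hTmeas]
    have hsec : ∀ x : ℝ, (Prod.mk x ⁻¹' T) = if x ≤ t then
        {y : Fin n → ℝ | (∀ m, y m ≤ x) ∧ ∀ m m' : Fin n, m ≤ m' → y m ≤ y m'}
        else (∅ : Set (Fin n → ℝ)) := by
      intro x
      ext y
      by_cases h : x ≤ t
      · simp [hT, h]
      · simp [hT, h]
    have hIH : ∀ x : ℝ, Measure.pi (fun j : Fin n => μ j.castSucc)
        {y : Fin n → ℝ | (∀ m, y m ≤ x) ∧ ∀ m m' : Fin n, m ≤ m' → y m ≤ y m'}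
        = ENNReal.ofReal (c' * H x ^ S') :=
      fun x => ih (fun j => μ j.castSucc) (fun j => hP _) (fun j => η j.castSucc)
        (fun j => hη _) (fun j x => hcdf _ x) x
    calc ∫⁻ x, Measure.pi (fun j : Fin n => μ j.castSucc) (Prod.mk x ⁻¹' T)
            ∂(μ (Fin.last n))
        = ∫⁻ x, Set.indicator (Set.Iic t)
            (fun x => ENNReal.ofReal (c' * H x ^ S')) x ∂(μ (Fin.last n)) := by
          refine lintegral_congr fun x => ?_
          rw [hsec x]
          by_cases h : x ≤ t
          · rw [if_pos h, Set.indicator_of_mem (Set.mem_Iic.2 h), hIH x]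
          · rw [if_neg h, Set.indicator_of_notMem (fun hc => h (Set.mem_Iic.1 hc)),
              measure_empty]
      _ = ∫⁻ x in Set.Iic t, ENNReal.ofReal (c' * H x ^ S') ∂(μ (Fin.last n)) := by
          rw [lintegral_indicator measurableSet_Iic]
      _ = ENNReal.ofReal c' *
            ∫⁻ x in Set.Iic t, ENNReal.ofReal (H x ^ S') ∂(μ (Fin.last n)) := by
          rw [← lintegral_const_mul' _ _ ENNReal.ofReal_ne_top]
          refine lintegral_congr fun x => ?_
          rw [← ENNReal.ofReal_mul hc'0]
      _ = ENNReal.ofReal c' * ENNReal.ofReal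
            (η (Fin.last n) / (S' + η (Fin.last n)) * H t ^ (S' + η (Fin.last n))) := by
          rw [savage_key H hHcont hHmono hHbot hHtop (μ (Fin.last n))
            (hη (Fin.last n)) hS'0 (fun x => hcdf _ x) t]
      _ = ENNReal.ofReal ((∏ i, η i) / (∏ i : Fin (n + 1), ∑ j ∈ Finset.Iic i, η j)
            * H t ^ (∑ i, η i)) := by
          rw [← ENNReal.ofReal_mul hc'0]
          congr 1
          have hsum : ∑ i : Fin (n + 1), η i = S' + η (Fin.last n) := by
            rw [Fin.sum_univ_castSucc]
          have hprod : ∏ i : Fin (n + 1), η i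
              = (∏ i : Fin n, η i.castSucc) * η (Fin.last n) := by
            rw [Fin.prod_univ_castSucc]
          have hD : ∏ i : Fin (n + 1), ∑ j ∈ Finset.Iic i, η j
              = (∏ i : Fin n, ∑ j ∈ Finset.Iic i, η j.castSucc)
                * (S' + η (Fin.last n)) := by
            rw [Fin.prod_univ_castSucc]
            congr 1
            · refine Finset.prod_congr rfl fun i _ => ?_
              rw [savage_Iic_castSucc, Finset.sum_map]
              rfl
            · have hIl : Finset.Iic (Fin.last n) = Finset.univ := by
                ext j; simp [Fin.le_last]
              rw [hIl, Fin.sum_univ_castSucc]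
          rw [hsum, hprod, hD, hc'def]
          have hne1 : (∏ i : Fin n, ∑ j ∈ Finset.Iic i, η j.castSucc) ≠ 0 := hBpos.ne'
          have hne2 : S' + η (Fin.last n) ≠ 0 :=
            ne_of_gt (lt_of_lt_of_le (hη (Fin.last n)) (le_add_of_nonneg_left hS'0))
          field_simp

/-- **Savage's formula for the identity permutation.** If `X 1, …, X N` are
independent with distribution functions `F i = H ^ (η i)` (`η i > 0`, `H` a
continuous distribution function), then
`P(X 1 ≤ X 2 ≤ ⋯ ≤ X N) = (∏ η i) / ∏_{i=1}^{N} (∑_{j=1}^{i} η j)`. -/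
theorem savage_identity_permutation_probability
    {Ω : Type*} [MeasurableSpace Ω] (P : Measure Ω) [IsProbabilityMeasure P]
    (N : ℕ) (X : Fin N → Ω → ℝ) (η : Fin N → ℝ) (H : ℝ → ℝ)
    (hmeas : ∀ i, Measurable (X i))
    (hindep : iIndepFun X P)
    (hη : ∀ i, 0 < η i)
    (hHcont : Continuous H) (hHmono : Monotone H)
    (hHbot : Tendsto H atBot (nhds 0)) (hHtop : Tendsto H atTop (nhds 1))
    (hcdf : ∀ i x, (P {ω | X i ω ≤ x}).toReal = H x ^ η i) :
    (P {ω | ∀ m m' : Fin N, m ≤ m' → X m ω ≤ X m' ω}).toReal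
      = (∏ i, η i) / ∏ i : Fin N, (∑ j ∈ Finset.Iic i, η j) := by
  set μ : Fin N → Measure ℝ := fun i => P.map (X i) with hμdef
  haveI hPμ : ∀ i, IsProbabilityMeasure (μ i) :=
    fun i => Measure.isProbabilityMeasure_map (hmeas i).aemeasurable
  have hcdf' : ∀ i x, μ i (Set.Iic x) = ENNReal.ofReal (H x ^ η i) := by
    intro i x
    rw [hμdef, Measure.map_apply (hmeas i) measurableSet_Iic]
    have : X i ⁻¹' Set.Iic x = {ω | X i ω ≤ x} := rfl
    rw [this, ← hcdf i x, ENNReal.ofReal_toReal (measure_ne_top P _)]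
  have hjmeas : Measurable (fun ω => fun i => X i ω) :=
    measurable_pi_lambda _ hmeas
  have hmap : P.map (fun ω => fun i => X i ω) = Measure.pi μ := by
    refine (Measure.pi_eq fun s hs => ?_).symm
    rw [Measure.map_apply hjmeas (MeasurableSet.univ_pi hs)]
    have hps : (fun ω => fun i => X i ω) ⁻¹' Set.pi Set.univ s = ⋂ i, X i ⁻¹' s i := by
      ext ω; simp [Set.mem_pi]
    rw [hps]
    have hind := hindep.measure_inter_preimage_eq_mul Finset.univ
      (sets := s) (fun i _ => hs i)
    simp only [Finset.mem_univ, Set.iInter_true, Set.biInter_univ] at hind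
    rw [hind]
    exact Finset.prod_congr rfl fun i _ =>
      (Measure.map_apply (hmeas i) (hs i)).symm
  set c : ℝ := (∏ i, η i) / ∏ i : Fin N, (∑ j ∈ Finset.Iic i, η j) with hcdef
  have hc0 : 0 ≤ c := by
    apply div_nonneg (Finset.prod_nonneg fun i _ => (hη i).le)
    exact (Finset.prod_pos fun i _ =>
      Finset.sum_pos (fun j _ => hη _) ⟨i, Finset.mem_Iic.2 le_rfl⟩).le
  have hSmeas : MeasurableSet {y : Fin N → ℝ | ∀ m m' : Fin N, m ≤ m' → y m ≤ y m'} := by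
    rw [Set.setOf_forall]
    refine MeasurableSet.iInter fun m => ?_
    rw [Set.setOf_forall]
    refine MeasurableSet.iInter fun m' => ?_
    by_cases h : m ≤ m'
    · have heq : {y : Fin N → ℝ | m ≤ m' → y m ≤ y m'} = {y : Fin N → ℝ | y m ≤ y m'} := by
        ext y; simp [h]
      rw [heq]
      exact measurableSet_le (measurable_pi_apply m) (measurable_pi_apply m')
    · have heq : {y : Fin N → ℝ | m ≤ m' → y m ≤ y m'} = Set.univ := by
        ext y; simp [h]
      rw [heq]; exact MeasurableSet.univ
  have hPA : P {ω | ∀ m m' : Fin N, m ≤ m' → X m ω ≤ X m' ω}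
      = Measure.pi μ {y : Fin N → ℝ | ∀ m m' : Fin N, m ≤ m' → y m ≤ y m'} := by
    rw [← hmap, Measure.map_apply hjmeas hSmeas]
    rfl
  -- monotone union
  set Sk : ℕ → Set (Fin N → ℝ) := fun k =>
    {y | (∀ m, y m ≤ (k : ℝ)) ∧ ∀ m m' : Fin N, m ≤ m' → y m ≤ y m'} with hSk
  have hmono : Monotone Sk := by
    intro k l hkl y hy
    exact ⟨fun m => le_trans (hy.1 m) (by exact_mod_cast Nat.cast_le.2 hkl), hy.2⟩
  have hunion : (⋃ k, Sk k) = {y : Fin N → ℝ | ∀ m m' : Fin N, m ≤ m' → y m ≤ y m'} := by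
    ext y
    simp only [Set.mem_iUnion, hSk, Set.mem_setOf_eq]
    constructor
    · rintro ⟨k, _, h2⟩; exact h2
    · intro h
      obtain ⟨k, hk⟩ := exists_nat_ge (∑ m, |y m|)
      refine ⟨k, fun m => ?_, h⟩
      calc y m ≤ |y m| := le_abs_self _
        _ ≤ ∑ m', |y m'| := Finset.single_le_sum (f := fun m' => |y m'|) (fun m' _ => abs_nonneg _) (Finset.mem_univ m)
        _ ≤ k := hk
  have htend1 : Tendsto (fun k : ℕ => Measure.pi μ (Sk k)) atTop
      (nhds (Measure.pi μ {y : Fin N → ℝ | ∀ m m' : Fin N, m ≤ m' → y m ≤ y m'})) := by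
    rw [← hunion]
    exact tendsto_measure_iUnion_atTop hmono
  have hval : ∀ k : ℕ, Measure.pi μ (Sk k)
      = ENNReal.ofReal (c * H (k : ℝ) ^ (∑ i, η i)) :=
    fun k => savage_aux H hHcont hHmono hHbot hHtop N μ hPμ η hη hcdf' (k : ℝ)
  have htend2 : Tendsto (fun k : ℕ => ENNReal.ofReal (c * H (k : ℝ) ^ (∑ i, η i)))
      atTop (nhds (ENNReal.ofReal c)) := by
    have hH : Tendsto (fun k : ℕ => H (k : ℝ)) atTop (nhds 1) :=
      hHtop.comp tendsto_natCast_atTop_atTop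
    have hrp : Tendsto (fun k : ℕ => H (k : ℝ) ^ (∑ i, η i)) atTop (nhds 1) := by
      have := ((Real.continuousAt_rpow_const 1 (∑ i, η i)
        (Or.inl one_ne_zero)).tendsto).comp hH
      simpa [Real.one_rpow, Function.comp_def] using this
    have : Tendsto (fun k : ℕ => c * H (k : ℝ) ^ (∑ i, η i)) atTop (nhds (c * 1)) :=
      hrp.const_mul c
    rw [mul_one] at this
    exact (ENNReal.continuous_ofReal.tendsto c).comp this
  have hfin : Measure.pi μ {y : Fin N → ℝ | ∀ m m' : Fin N, m ≤ m' → y m ≤ y m'}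
      = ENNReal.ofReal c := by
    refine tendsto_nhds_unique ?_ htend2
    simpa only [hval] using htend1
  rw [hPA, hfin, ENNReal.toReal_ofReal hc0]
end

section
/- For any positive real numbers η_1, ..., η_N, summing Savage's ordering probabilities over all permutations gives one: ∑_{σ ∈ S_N} ∏_{i=1}^{N} ( 1 / ∑_{j=1}^{i} η_{σ(j)} ) = 1 / ∏_{i=1}^{N} η_i, where the outer sum is over all permutations σ of {1,...,N}. -/
open Finset

lemma Iic_castSucc_map (n : ℕ) (i : Fin n) :
    Finset.Iic (Fin.castSucc i) = (Finset.Iic i).map Fin.castSuccEmb := by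
  ext j
  simp only [mem_Iic, mem_map, Fin.castSuccEmb_apply]
  constructor
  · intro h
    refine ⟨⟨j.val, lt_of_le_of_lt h i.isLt⟩, ?_, ?_⟩
    · exact h
    · ext; simp
  · rintro ⟨k, hk, rfl⟩
    exact hk

def permDecomp (n : ℕ) (pe : Fin (n+1) × Equiv.Perm (Fin n)) : Equiv.Perm (Fin (n+1)) :=
  (finSuccEquivLast).trans ((pe.2.optionCongr).trans (finSuccEquiv' pe.1).symm)

lemma permDecomp_last (n : ℕ) (pe : Fin (n+1) × Equiv.Perm (Fin n)) :
    permDecomp n pe (Fin.last n) = pe.1 := by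
  simp [permDecomp, Equiv.trans_apply, finSuccEquivLast_last, finSuccEquiv'_symm_none]

lemma permDecomp_castSucc (n : ℕ) (pe : Fin (n+1) × Equiv.Perm (Fin n)) (i : Fin n) :
    permDecomp n pe (Fin.castSucc i) = pe.1.succAbove (pe.2 i) := by
  simp [permDecomp, Equiv.trans_apply, finSuccEquivLast_castSucc, finSuccEquiv'_symm_some]

lemma permDecomp_bij (n : ℕ) : Function.Bijective (permDecomp n) := by
  rw [Fintype.bijective_iff_injective_and_card]
  constructor
  · rintro ⟨p, e⟩ ⟨q, f⟩ h
    have hp : p = q := by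
      have := congrArg (· (Fin.last n)) h
      simpa [permDecomp_last] using this
    subst hp
    have he : e = f := by
      ext i
      have h2 := congrArg (fun σ : Equiv.Perm (Fin (n+1)) => σ (Fin.castSucc i)) h
      simp only [permDecomp_castSucc] at h2
      exact congrArg Fin.val (Fin.succAbove_right_injective h2)
    simp [he]
  · simp [Fintype.card_perm, Nat.factorial_succ]

/-- **Savage's probabilities sum to one.** For positive reals `η 1, …, η N`,
`∑_{σ ∈ S_N} ∏_{i=1}^{N} 1 / (∑_{j=1}^{i} η (σ j)) = 1 / ∏_{i=1}^{N} η i`. -/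
theorem sum_savage_probabilities_eq_one
    (N : ℕ) (η : Fin N → ℝ) (hη : ∀ i, 0 < η i) :
    ∑ σ : Equiv.Perm (Fin N), ∏ i : Fin N, (1 / ∑ j ∈ Finset.Iic i, η (σ j))
      = 1 / ∏ i, η i := by
  induction N with
  | zero => simp
  | succ n ih =>
    have hP : (0:ℝ) < ∏ i, η i := Finset.prod_pos (fun i _ => hη i)
    have hS : (0:ℝ) < ∑ i, η i := Finset.sum_pos (fun i _ => hη i) univ_nonempty
    rw [← Function.Bijective.sum_comp (permDecomp_bij n)
        (fun σ => ∏ i : Fin (n+1), (1 / ∑ j ∈ Finset.Iic i, η (σ j))),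
      Fintype.sum_prod_type]
    have key : ∀ p : Fin (n+1), ∀ e : Equiv.Perm (Fin n),
        ∏ i : Fin (n+1), (1 / ∑ j ∈ Finset.Iic i, η (permDecomp n (p, e) j))
          = (∏ i : Fin n, (1 / ∑ j ∈ Finset.Iic i, (η ∘ p.succAbove) (e j)))
            * (1 / ∑ i, η i) := by
      intro p e
      rw [Fin.prod_univ_castSucc]
      congr 1
      · refine Finset.prod_congr rfl fun i _ => ?_
        congr 1
        rw [Iic_castSucc_map, Finset.sum_map]
        refine Finset.sum_congr rfl fun j _ => ?_
        exact congrArg η (permDecomp_castSucc n (p, e) j)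
      · congr 1
        have h1 : Finset.Iic (Fin.last n) = Finset.univ := by
          ext j; simp [Fin.le_last]
        rw [h1]
        exact Equiv.sum_comp _ η
    calc ∑ p : Fin (n+1), ∑ e : Equiv.Perm (Fin n),
          ∏ i : Fin (n+1), (1 / ∑ j ∈ Finset.Iic i, η (permDecomp n (p, e) j))
        = ∑ p : Fin (n+1), (1 / ∏ i, (η ∘ p.succAbove) i) * (1 / ∑ i, η i) := by
          refine Finset.sum_congr rfl fun p _ => ?_
          rw [Finset.sum_congr rfl fun e _ => key p e, ← Finset.sum_mul,
            ih (η ∘ p.succAbove) (fun i => hη _)]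
      _ = ∑ p : Fin (n+1), (η p / ∏ i, η i) * (1 / ∑ i, η i) := by
          refine Finset.sum_congr rfl fun p _ => ?_
          congr 1
          rw [Fin.prod_univ_succAbove η p]
          have hQ : (∏ x, η (p.succAbove x)) ≠ 0 :=
            (Finset.prod_pos (fun i _ => hη _)).ne'
          field_simp
          exact (div_self hQ).trans (div_self (hη p).ne').symm
      _ = 1 / ∏ i, η i := by
          rw [← Finset.sum_mul, ← Finset.sum_div]
          field_simp
end
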